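/- arXiv:1110.0580 — 3 statements merged into one kernel-verified Lean document; each statement's English description precedes it below -/
import Mathlib

section
/- For every polynomial f and every form u, H_{q^{-1}}(u θ_0 f)(z) = q (H_q u)θ_0(h_{q^{-1}} f)(z) + (u θ_0(H_{q^{-1}} f))(z), an identity of polynomials. -/
open Polynomial

noncomputable section

namespace QLH

/-- A *form*: a linear functional on ℂ[x]. -/
abbrev PForm : Type := Polynomial ℂ →ₗ[ℂ] ℂ

private lemma divByMonic_add (d f g : Polynomial ℂ) (hd : d.Monic) :
    (f + g) /ₘ d = f /ₘ d + g /ₘ d := by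
  apply mul_left_cancel₀ hd.ne_zero
  have h1 : d * (f /ₘ d) = f - f %ₘ d := by
    rw [Polynomial.modByMonic_eq_sub_mul_div f d]; ring
  have h2 : d * (g /ₘ d) = g - g %ₘ d := by
    rw [Polynomial.modByMonic_eq_sub_mul_div g d]; ring
  have h3 : d * ((f + g) /ₘ d) = (f + g) - (f + g) %ₘ d := by
    rw [Polynomial.modByMonic_eq_sub_mul_div (f + g) d]; ring
  rw [mul_add, h1, h2, h3, Polynomial.add_modByMonic]
  ring

private lemma divByMonic_smul (d f : Polynomial ℂ) (a : ℂ) (hd : d.Monic) :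
    (a • f) /ₘ d = a • (f /ₘ d) := by
  apply mul_left_cancel₀ hd.ne_zero
  have h1 : d * (f /ₘ d) = f - f %ₘ d := by
    rw [Polynomial.modByMonic_eq_sub_mul_div f d]; ring
  have h3 : d * ((a • f) /ₘ d) = (a • f) - (a • f) %ₘ d := by
    rw [Polynomial.modByMonic_eq_sub_mul_div (a • f) d]; ring
  rw [h3, Polynomial.smul_modByMonic, mul_smul_comm, h1, smul_sub]

/-- `(h_a f)(x) = f (a x)`. -/
def hP (a : ℂ) : Polynomial ℂ →ₗ[ℂ] Polynomial ℂ :=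
  (Polynomial.aeval (Polynomial.C a * Polynomial.X : Polynomial ℂ)).toLinearMap

/-- `(θ_c f)(x) = (f(x) - f(c))/(x - c)`. -/
def thetaP (c : ℂ) : Polynomial ℂ →ₗ[ℂ] Polynomial ℂ where
  toFun f := (f - C (f.eval c)) /ₘ (X - C c)
  map_add' f g := by
    try dsimp only
    have h : f + g - C ((f + g).eval c)
        = (f - C (f.eval c)) + (g - C (g.eval c)) := by
      simp only [eval_add, C_add]; ring
    rw [h, divByMonic_add _ _ _ (monic_X_sub_C c)]
  map_smul' a f := by
    try dsimp only
    have h : a • f - C ((a • f).eval c) = a • (f - C (f.eval c)) := by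
      simp only [eval_smul, smul_eq_mul, smul_sub, Polynomial.smul_C]
    rw [h, divByMonic_smul _ _ _ (monic_X_sub_C c)]
    rfl

/-- `(H_q f)(x) = (f(qx) - f(x))/((q-1)x)`. -/
def HqP (q : ℂ) : Polynomial ℂ →ₗ[ℂ] Polynomial ℂ :=
  (q - 1)⁻¹ • (thetaP 0 ∘ₗ (hP q - LinearMap.id))

/-- `⟨h_a u, f⟩ = ⟨u, h_a f⟩`. -/
def hF (a : ℂ) (u : PForm) : PForm := u ∘ₗ hP a

/-- `⟨H_q u, f⟩ = -⟨u, H_q f⟩`. -/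
def HqF (q : ℂ) (u : PForm) : PForm := -(u ∘ₗ HqP q)

/-- `⟨g u, f⟩ = ⟨u, g f⟩`. -/
def mF (g : Polynomial ℂ) (u : PForm) : PForm := u ∘ₗ LinearMap.mulLeft ℂ g

/-- `⟨(x - c)⁻¹ u, f⟩ = ⟨u, θ_c f⟩`. -/
def divF (c : ℂ) (u : PForm) : PForm := u ∘ₗ thetaP c

/-- The Dirac form `δ_c`. -/
def deltaF (c : ℂ) : PForm := Polynomial.leval c

/-- Kernel used in the left product of a form by a polynomial. -/
def kern (u : PForm) (j : ℕ) : Polynomial ℂ :=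
  ∑ i ∈ Finset.range (j + 1), C (u (X ^ (j - i))) * X ^ i

/-- The left product `f ↦ u f`, `(uf)(x) = ⟨u_ζ, (x f(x) - ζ f(ζ))/(x - ζ)⟩`. -/
def lmul (u : PForm) : Polynomial ℂ →ₗ[ℂ] Polynomial ℂ where
  toFun f := f.sum fun j a => a • kern u j
  map_add' f g :=
    Polynomial.sum_add_index f g _ (fun i => zero_smul ℂ _) fun i b₁ b₂ => add_smul b₁ b₂ _
  map_smul' a f := by
    try dsimp only
    rw [Polynomial.sum_smul_index f a (fun j b => b • kern u j) fun i => zero_smul ℂ _]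
    simp only [Polynomial.sum_def, mul_smul, ← Finset.smul_sum]
    rfl

/-- The Cauchy product of two forms: `⟨uv, f⟩ = ⟨u, v f⟩`. -/
def cF (u v : PForm) : PForm := u ∘ₗ lmul v

/-- The q-difference equation `H_q(Φu) + Ψu + B(x⁻¹ u (h_q u)) = 0`. -/
def LHeq (q : ℂ) (u : PForm) (Φ Ψ B : Polynomial ℂ) : Prop :=
  HqF q (mF Φ u) + mF Ψ u + mF B (divF 0 (cF u (hF q u))) = 0

/-- A form is regular when it possesses a MOPS. -/
def IsRegular (u : PForm) : Prop :=
  ∃ P : ℕ → Polynomial ℂ, (∀ n, (P n).Monic) ∧ (∀ n, (P n).natDegree = n) ∧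
    (∀ n, u (P n * P n) ≠ 0) ∧ ∀ m n, m ≠ n → u (P m * P n) = 0

/-- A regular form is q-semiclassical when it satisfies `H_q(Φu) + Ψu = 0`, `Φ` monic. -/
def IsSemiclassical (q : ℂ) (u : PForm) : Prop :=
  IsRegular u ∧ ∃ Φ Ψ : Polynomial ℂ, Φ.Monic ∧ HqF q (mF Φ u) + mF Ψ u = 0

/-- A regular form is q-Laguerre–Hahn when it satisfies some equation `LHeq`. -/
def IsLaguerreHahn (q : ℂ) (u : PForm) : Prop :=
  IsRegular u ∧ ∃ Φ Ψ B : Polynomial ℂ, Φ.Monic ∧ LHeq q u Φ Ψ B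

/-- `u` is of class `s`: `s` is the minimum of `max (deg Ψ - 1) (max (deg Φ) (deg B) - 2)`
over all q-difference equations `LHeq q u Φ Ψ B` (`Φ` monic) satisfied by `u`. -/
def HasClass (q : ℂ) (u : PForm) (s : ℕ) : Prop :=
  (∃ Φ Ψ B : Polynomial ℂ, Φ.Monic ∧ LHeq q u Φ Ψ B ∧
      Φ.natDegree ≤ s + 2 ∧ B.natDegree ≤ s + 2 ∧ Ψ.natDegree ≤ s + 1) ∧
  ∀ t : ℕ, (∃ Φ Ψ B : Polynomial ℂ, Φ.Monic ∧ LHeq q u Φ Ψ B ∧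
      Φ.natDegree ≤ t + 2 ∧ B.natDegree ≤ t + 2 ∧ Ψ.natDegree ≤ t + 1) → s ≤ t

/-- Formal Stieltjes series `S(u)(z) = -∑ (u)_n z^{-n-1}`, as a formal Laurent
series in the variable `T = z⁻¹`. -/
def Sf (u : PForm) : LaurentSeries ℂ :=
  HahnSeries.ofPowerSeries ℤ ℂ (PowerSeries.mk fun n => if n = 0 then 0 else -u (X ^ (n - 1)))

/-- A polynomial `f(z)`, viewed as a formal Laurent series in `T = z⁻¹`. -/
def toLS (f : Polynomial ℂ) : LaurentSeries ℂ :=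
  ∑ j ∈ Finset.range (f.natDegree + 1), HahnSeries.single (-(j : ℤ)) (f.coeff j)

/-- The Laurent series `z` (in the variable `T = z⁻¹`). -/
def zLS : LaurentSeries ℂ := HahnSeries.single (-1 : ℤ) 1

/-- `(h_a F)(z) = F(az)` on formal Laurent series in `T = z⁻¹`. -/
def hLS (a : ℂ) (F : LaurentSeries ℂ) : LaurentSeries ℂ where
  coeff := fun k => a ^ (-k) * F.coeff k
  isPWO_support' := F.isPWO_support'.mono fun k hk => by
    simp only [Function.mem_support] at hk ⊢
    exact fun h => hk (by rw [h, mul_zero])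

/-- `(H_q F)(z) = (F(qz) - F(z))/((q-1)z)` on formal Laurent series in `T = z⁻¹`. -/
def HqLS (q : ℂ) (F : LaurentSeries ℂ) : LaurentSeries ℂ :=
  HahnSeries.single (1 : ℤ) ((q - 1)⁻¹) * (hLS q F - F)



private lemma thetaP_zero_X_pow (n : ℕ) : thetaP 0 ((X : Polynomial ℂ) ^ (n + 1)) = X ^ n := by
  show ((X : Polynomial ℂ) ^ (n+1) - C (eval 0 (X ^ (n+1)))) /ₘ (X - C 0) = X ^ n
  simp only [eval_pow, eval_X, zero_pow (Nat.succ_ne_zero n), map_zero, sub_zero]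
  rw [pow_succ, mul_comm, Polynomial.mul_divByMonic_cancel_left _ monic_X]

private lemma thetaP_zero_one : thetaP 0 (1 : Polynomial ℂ) = 0 := by
  show ((1 : Polynomial ℂ) - C (eval 0 1)) /ₘ (X - C 0) = 0
  simp

private lemma hP_X_pow (a : ℂ) (n : ℕ) : hP a ((X : Polynomial ℂ) ^ n) = (a ^ n) • X ^ n := by
  show Polynomial.aeval (C a * X : Polynomial ℂ) (X ^ n) = (a ^ n) • X ^ n
  rw [map_pow, Polynomial.aeval_X, mul_pow, ← C_pow, Polynomial.smul_eq_C_mul]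

private lemma HqP_apply (q : ℂ) (f : Polynomial ℂ) :
    HqP q f = (q - 1)⁻¹ • thetaP 0 (hP q f - f) := by
  simp only [HqP, LinearMap.smul_apply, LinearMap.comp_apply, LinearMap.sub_apply,
    LinearMap.id_apply]

private lemma HqP_one (q : ℂ) : HqP q (1 : Polynomial ℂ) = 0 := by
  rw [HqP_apply]
  have : hP q (1 : Polynomial ℂ) = 1 := map_one (Polynomial.aeval (C q * X : Polynomial ℂ))
  rw [this, sub_self, map_zero, smul_zero]

private lemma HqP_C (q : ℂ) (a : ℂ) : HqP q (C a : Polynomial ℂ) = 0 := by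
  have : (C a : Polynomial ℂ) = a • 1 := by rw [smul_eq_C_mul, mul_one]
  rw [this, map_smul, HqP_one, smul_zero]

private lemma HqP_X_pow (q : ℂ) (n : ℕ) :
    HqP q ((X : Polynomial ℂ) ^ (n + 1)) = ((q - 1)⁻¹ * (q ^ (n + 1) - 1)) • X ^ n := by
  rw [HqP_apply, hP_X_pow]
  have : (q ^ (n+1)) • (X : Polynomial ℂ) ^ (n+1) - X ^ (n+1)
      = (q ^ (n+1) - 1) • X ^ (n+1) := by
    rw [sub_smul, one_smul]
  rw [this, map_smul, thetaP_zero_X_pow, smul_smul]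

private lemma lmul_X_pow (u : PForm) (n : ℕ) : lmul u ((X : Polynomial ℂ) ^ n) = kern u n := by
  show ((X : Polynomial ℂ) ^ n).sum (fun j a => a • kern u j) = kern u n
  rw [X_pow_eq_monomial, Polynomial.sum_monomial_index _ _ (zero_smul ℂ _), one_smul]

private lemma HqF_one (q : ℂ) (u : PForm) : HqF q u (1 : Polynomial ℂ) = 0 := by
  show -(u (HqP q (1 : Polynomial ℂ))) = 0
  rw [HqP_one, map_zero, neg_zero]

private lemma HqF_X_pow (q : ℂ) (u : PForm) (n : ℕ) :
    HqF q u ((X : Polynomial ℂ) ^ (n + 1)) = -((q - 1)⁻¹ * (q ^ (n + 1) - 1) * u (X ^ n)) := by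
  show -(u (HqP q ((X : Polynomial ℂ) ^ (n+1)))) = _
  rw [HqP_X_pow, map_smul, smul_eq_mul, mul_assoc]

private lemma kern_eq_sum (u : PForm) (j : ℕ) :
    kern u j = ∑ i ∈ Finset.range (j + 1), u ((X : Polynomial ℂ) ^ (j - i)) • (X : Polynomial ℂ) ^ i := by
  unfold kern
  exact Finset.sum_congr rfl fun i _ => (Polynomial.smul_eq_C_mul _).symm

private lemma inv_sub_one_inv (q : ℂ) (hq0 : q ≠ 0) (hqm : q - 1 ≠ 0) :
    (q⁻¹ - 1)⁻¹ = -q * (q - 1)⁻¹ := by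
  apply inv_eq_of_mul_eq_one_left
  have : -q * (q - 1)⁻¹ * (q⁻¹ - 1) = (q - 1)⁻¹ * (q - 1) := by
    field_simp; ring
  rw [this, inv_mul_cancel₀ hqm]

private lemma scalar_key (q : ℂ) (hq0 : q ≠ 0) (hqm : q - 1 ≠ 0) (i k : ℕ) :
    (q⁻¹ - 1)⁻¹ * ((q⁻¹) ^ (i + 1) - 1)
      = q * (q⁻¹) ^ (i + k + 2) * (-((q - 1)⁻¹ * (q ^ (k + 1) - 1)))
        + (q⁻¹ - 1)⁻¹ * ((q⁻¹) ^ (i + k + 2) - 1) := by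
  have e1 : (q⁻¹) ^ (i + k + 2) * q ^ (k + 1) = (q⁻¹) ^ (i + 1) := by
    rw [inv_pow, inv_pow, show i + k + 2 = (i + 1) + (k + 1) by ring, pow_add, mul_inv,
      mul_assoc, inv_mul_cancel₀ (pow_ne_zero _ hq0), mul_one]
  rw [inv_sub_one_inv q hq0 hqm]
  linear_combination (q * (q - 1)⁻¹) * e1

private lemma key (q : ℂ) (hq0 : q ≠ 0) (hqm : q - 1 ≠ 0) (u : PForm) (m : ℕ) :
    HqP q⁻¹ (kern u (m + 1))
      = (q * (q⁻¹) ^ (m + 2)) • kern (HqF q u) (m + 1)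
        + ((q⁻¹ - 1)⁻¹ * ((q⁻¹) ^ (m + 2) - 1)) • kern u m := by
  rw [kern_eq_sum u (m + 1), map_sum]
  simp only [map_smul]
  rw [show m + 1 + 1 = m + 2 from rfl]
  rw [Finset.sum_range_succ' (fun i => u ((X : Polynomial ℂ) ^ (m + 1 - i)) • HqP q⁻¹ ((X : Polynomial ℂ) ^ i))]
  rw [pow_zero, HqP_one, smul_zero, add_zero]
  rw [kern_eq_sum (HqF q u) (m + 1), kern_eq_sum u m]
  rw [show m + 1 + 1 = m + 2 from rfl, Finset.sum_range_succ
    (fun i => (HqF q u) ((X : Polynomial ℂ) ^ (m + 1 - i)) • (X : Polynomial ℂ) ^ i)]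
  rw [Nat.sub_self, pow_zero, HqF_one, zero_smul, add_zero]
  rw [Finset.smul_sum, Finset.smul_sum, ← Finset.sum_add_distrib]
  refine Finset.sum_congr rfl fun i hi => ?_
  rw [Finset.mem_range] at hi
  obtain ⟨k, hk⟩ : ∃ k, m = i + k := ⟨m - i, by omega⟩
  subst hk
  rw [show i + k + 1 - (i + 1) = k by omega, show i + k + 1 - i = k + 1 by omega,
    show i + k - i = k by omega]
  rw [HqP_X_pow, HqF_X_pow, smul_smul, smul_smul, smul_smul]
  rw [← add_smul]
  congr 1
  have h := scalar_key q hq0 hqm i k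
  linear_combination u ((X : Polynomial ℂ) ^ k) * h

/-- `H_{q⁻¹}(uθ₀f) = q (H_q u)θ₀(h_{q⁻¹}f) + uθ₀(H_{q⁻¹}f)`. -/
theorem Hq_leftprod (q : ℂ) (hq0 : q ≠ 0) (hq : ∀ n : ℕ, 1 ≤ n → q ^ n ≠ 1)
    (f : Polynomial ℂ) (u : PForm) :
    HqP q⁻¹ (lmul u (thetaP 0 f))
      = q • lmul (HqF q u) (thetaP 0 (hP q⁻¹ f)) + lmul u (thetaP 0 (HqP q⁻¹ f)) := by
  have hqm : q - 1 ≠ 0 := sub_ne_zero.mpr (by simpa using hq 1 le_rfl)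
  induction f using Polynomial.induction_on' with
  | add p r hp hr =>
    simp only [map_add, smul_add] at *
    rw [hp, hr]; abel
  | monomial n a =>
    have hmain : HqP q⁻¹ (lmul u (thetaP 0 ((X : Polynomial ℂ) ^ n)))
        = q • lmul (HqF q u) (thetaP 0 (hP q⁻¹ ((X : Polynomial ℂ) ^ n)))
          + lmul u (thetaP 0 (HqP q⁻¹ ((X : Polynomial ℂ) ^ n))) := by
      match n with
      | 0 =>
        rw [pow_zero, thetaP_zero_one, map_zero, map_zero]
        have h1 : hP q⁻¹ (1 : Polynomial ℂ) = 1 := map_one (Polynomial.aeval (C q⁻¹ * X : Polynomial ℂ))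
        rw [h1, thetaP_zero_one, map_zero, smul_zero, HqP_one, map_zero, map_zero, add_zero]
      | 1 =>
        rw [show ((X : Polynomial ℂ) ^ 1) = X ^ (0 + 1) from rfl]
        rw [thetaP_zero_X_pow, lmul_X_pow]
        have hk0 : kern u 0 = C (u 1) := by
          rw [kern_eq_sum]
          simp [Polynomial.smul_eq_C_mul]
        rw [hk0, HqP_C]
        have hk1 : kern (HqF q u) 0 = 0 := by
          rw [kern_eq_sum]
          simp [HqF_one]
        rw [hP_X_pow, map_smul, thetaP_zero_X_pow, map_smul, lmul_X_pow, hk1,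
          smul_zero, smul_zero, HqP_X_pow, map_smul]
        rw [pow_zero, thetaP_zero_one, smul_zero, map_zero, add_zero]
      | (m+2) =>
        rw [show m + 2 = (m + 1) + 1 from rfl, thetaP_zero_X_pow, lmul_X_pow]
        rw [hP_X_pow, map_smul, thetaP_zero_X_pow, map_smul, lmul_X_pow]
        rw [HqP_X_pow, map_smul, thetaP_zero_X_pow, map_smul, lmul_X_pow]
        rw [smul_smul, key q hq0 hqm u m]
    rw [← Polynomial.C_mul_X_pow_eq_monomial, ← Polynomial.smul_eq_C_mul]
    simp only [map_smul]
    rw [hmain, smul_add, smul_comm a q]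


end QLH

end
end

section
/- Let u be a regular form that is strict q-Laguerre–Hahn, satisfying H_q(Φ u) + Ψ u + B(x^{-1} u (h_q u)) = 0 with Φ monic. If two polynomials Δ and Ω satisfy Δ u + Ω(x^{-1} u (h_q u)) = 0, then Δ = 0 and Ω = 0. -/
open Polynomial

noncomputable section

namespace QLH

private lemma hP_apply (a : ℂ) (f : Polynomial ℂ) : hP a f = f.comp (C a * X) := rfl

private lemma hP_hP (a b : ℂ) (f : Polynomial ℂ) : hP a (hP b f) = hP (b * a) f := by
  simp only [hP_apply, ← comp_eq_aeval]
  rw [comp_assoc]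
  congr 1
  rw [mul_comp, C_comp, X_comp, ← mul_assoc, ← C_mul]

private lemma hP_one (f : Polynomial ℂ) : hP 1 f = f := by
  rw [hP_apply, C_1, one_mul, comp_X]

private lemma hP_mul' (a : ℂ) (f g : Polynomial ℂ) : hP a (f * g) = hP a f * hP a g := by
  simp [hP, map_mul]

private lemma hP_eval_zero (a : ℂ) (f : Polynomial ℂ) : (hP a f).eval 0 = f.eval 0 := by
  simp [hP_apply, eval_comp]

private lemma X_mul_thetaP (h : Polynomial ℂ) :
    X * thetaP 0 h = h - C (h.eval 0) := by
  have hmod : (h - C (h.eval 0)) %ₘ (X - C (0:ℂ)) = 0 := by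
    rw [modByMonic_X_sub_C_eq_C_eval]
    simp
  have := Polynomial.modByMonic_add_div (h - C (h.eval 0)) (X - C (0:ℂ))
  rw [hmod, zero_add] at this
  show X * ((h - C (h.eval 0)) /ₘ (X - C 0)) = _
  simp only [C_0, sub_zero] at this ⊢
  exact this

private lemma X_mul_HqP (q : ℂ) (f : Polynomial ℂ) :
    X * HqP q f = C (q - 1)⁻¹ * (hP q f - f) := by
  have h1 : HqP q f = (q - 1)⁻¹ • thetaP 0 (hP q f - f) := by
    simp [HqP]
  rw [h1, mul_smul_comm, X_mul_thetaP]
  have : (hP q f - f).eval 0 = 0 := by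
    simp [hP_eval_zero]
  rw [this]
  simp [Polynomial.smul_eq_C_mul]

private lemma HqP_mul (q : ℂ) (f p : Polynomial ℂ) :
    HqP q (f * p) = hP q f * HqP q p + HqP q f * p := by
  apply mul_left_cancel₀ (X_ne_zero : (X : Polynomial ℂ) ≠ 0)
  have h1 := X_mul_HqP q p
  have h2 := X_mul_HqP q f
  have h3 := X_mul_HqP q (f * p)
  have hmul := hP_mul' q f p
  linear_combination h3 - hP q f * h1 - p * h2 + C (q-1)⁻¹ * hmul

private lemma ortho_low (u : PForm) (P : ℕ → Polynomial ℂ)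
    (hm : ∀ n, (P n).Monic) (hd : ∀ n, (P n).natDegree = n)
    (horth : ∀ m n, m ≠ n → u (P m * P n) = 0) :
    ∀ d : ℕ, ∀ n, d < n → ∀ f : Polynomial ℂ, f.natDegree ≤ d → u (f * P n) = 0 := by
  intro d
  induction d with
  | zero =>
    intro n hn f hf
    have hf' : f = C (f.coeff 0) := Polynomial.eq_C_of_natDegree_le_zero hf
    have hP0 : P 0 = 1 := ((hm 0).natDegree_eq_zero).mp (hd 0)
    have hstep : f * P n = f.coeff 0 • (P 0 * P n) := by
      rw [hP0, Polynomial.smul_eq_C_mul, one_mul, ← hf']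
    rw [hstep, map_smul, horth 0 n (by omega)]
    simp
  | succ d ih =>
    intro n hn f hf
    set c := f.coeff (d+1) with hc
    set g := f - c • P (d+1) with hg
    have hPcoeff : (P (d+1)).coeff (d+1) = 1 := by
      have := (hm (d+1)).coeff_natDegree
      rwa [hd (d+1)] at this
    have hgd : g.natDegree ≤ d := by
      apply Polynomial.natDegree_le_iff_coeff_eq_zero.mpr
      intro m hm'
      have h1 : g.coeff m = f.coeff m - c * (P (d+1)).coeff m := by
        rw [hg, Polynomial.coeff_sub, Polynomial.coeff_smul, smul_eq_mul]
      rcases eq_or_lt_of_le (Nat.succ_le_of_lt hm') with h | h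
      · rw [h1, ← h, hPcoeff, mul_one, hc, sub_self]
      · rw [h1, Polynomial.coeff_eq_zero_of_natDegree_lt (lt_of_le_of_lt hf h),
          Polynomial.coeff_eq_zero_of_natDegree_lt (by rw [hd]; exact h), mul_zero, sub_zero]
    have hsplit : f * P n = g * P n + c • (P (d+1) * P n) := by
      rw [hg]
      simp only [Polynomial.smul_eq_C_mul]
      ring
    rw [hsplit, map_add, map_smul, ih n (by omega) g hgd, horth (d+1) n (by omega)]
    simp

private lemma regular_mF_zero (u : PForm) (hreg : IsRegular u)
    (Δ : Polynomial ℂ) (hu : ∀ s, u (Δ * s) = 0) : Δ = 0 := by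
  obtain ⟨P, hm, hd, hnz, horth⟩ := hreg
  by_contra hne
  set d := Δ.natDegree with hdd
  set g := Δ - Δ.coeff d • P d with hg
  have hPcoeff : (P d).coeff d = 1 := by
    have := (hm d).coeff_natDegree
    rwa [hd d] at this
  have hgcoeff : ∀ m, d ≤ m → g.coeff m = 0 := by
    intro m hmm
    have h1 : g.coeff m = Δ.coeff m - Δ.coeff d * (P d).coeff m := by
      rw [hg, Polynomial.coeff_sub, Polynomial.coeff_smul, smul_eq_mul]
    rcases eq_or_lt_of_le hmm with h | h
    · rw [h1, ← h, hPcoeff, mul_one, sub_self]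
    · have hΔm : Δ.coeff m = 0 := Polynomial.coeff_eq_zero_of_natDegree_lt (by omega)
      have hPm : (P d).coeff m = 0 :=
        Polynomial.coeff_eq_zero_of_natDegree_lt (by rw [hd]; exact h)
      rw [h1, hΔm, hPm, mul_zero, sub_zero]
  have hgP : u (g * P d) = 0 := by
    rcases eq_or_ne g 0 with h0 | h0
    · rw [h0, zero_mul, map_zero]
    · have hglt : g.natDegree < d := by
        by_contra hcon
        push_neg at hcon
        exact h0 (Polynomial.leadingCoeff_eq_zero.mp (hgcoeff _ hcon))
      exact ortho_low u P hm hd horth g.natDegree d hglt g le_rfl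
  have hsplit : Δ * P d = g * P d + Δ.coeff d • (P d * P d) := by
    rw [hg]
    simp only [Polynomial.smul_eq_C_mul]
    ring
  have := hu (P d)
  rw [hsplit, map_add, map_smul, hgP, zero_add, smul_eq_mul] at this
  rcases mul_eq_zero.mp this with h | h
  · exact hne (Polynomial.leadingCoeff_eq_zero.mp h)
  · exact hnz d h

/-- for a strict q-Laguerre–Hahn form, a relation
`Δu + Ω(x⁻¹ u (h_q u)) = 0` forces `Δ = Ω = 0`. -/
theorem strict_LH_no_relation (q : ℂ) (hq0 : q ≠ 0) (hq : ∀ n : ℕ, 1 ≤ n → q ^ n ≠ 1)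
    (u : PForm) (hreg : IsRegular u)
    (Φ Ψ B : Polynomial ℂ) (hΦ : Φ.Monic) (heq : LHeq q u Φ Ψ B)
    (hstrict : ¬ IsSemiclassical q u)
    (Δ Ω : Polynomial ℂ)
    (hrel : mF Δ u + mF Ω (divF 0 (cF u (hF q u))) = 0) :
    Δ = 0 ∧ Ω = 0 := by
  classical
  set D := divF 0 (cF u (hF q u)) with hDdef
  have hΩ : Ω = 0 := by
    by_contra hΩne
    apply hstrict
    refine ⟨hreg, ?_⟩
    set A := hP q Ω * Φ with hA
    have hΩq : hP q Ω ≠ 0 := by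
      intro h
      apply hΩne
      have h2 := congrArg (hP q⁻¹) h
      rw [hP_hP, mul_inv_cancel₀ hq0, hP_one, map_zero] at h2
      exact h2
    have hAne : A ≠ 0 := mul_ne_zero hΩq hΦ.ne_zero
    set c := A.leadingCoeff with hc
    have hcne : c ≠ 0 := Polynomial.leadingCoeff_ne_zero.mpr hAne
    set R := Ω * Ψ - HqP q Ω * Φ - B * Δ with hR
    refine ⟨C c⁻¹ * A, C c⁻¹ * R, ?_, ?_⟩
    · show (C c⁻¹ * A).leadingCoeff = 1
      rw [Polynomial.leadingCoeff_mul, Polynomial.leadingCoeff_C, ← hc,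
        inv_mul_cancel₀ hcne]
    · have hCm : ∀ s : Polynomial ℂ, u (C c⁻¹ * s) = c⁻¹ * u s := by
        intro s
        rw [← Polynomial.smul_eq_C_mul, map_smul, smul_eq_mul]
      apply LinearMap.ext
      intro p
      have heq' : HqF q (mF Φ u) + mF Ψ u + mF B D = 0 := heq
      have e1 := LinearMap.congr_fun heq' (Ω * p)
      have e2 := LinearMap.congr_fun hrel (B * p)
      simp only [HqF, mF, LinearMap.add_apply, LinearMap.neg_apply, LinearMap.comp_apply,
        LinearMap.mulLeft_apply, LinearMap.zero_apply] at e1 e2 ⊢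
      have h1 : u (A * HqP q p) = u (Φ * HqP q (Ω * p)) - u (HqP q Ω * Φ * p) := by
        rw [← map_sub]
        congr 1
        rw [HqP_mul q Ω p, hA]
        ring
      have h2 : u (R * p) = u (Ψ * (Ω * p)) - u (HqP q Ω * Φ * p) - u (Δ * (B * p)) := by
        rw [← map_sub, ← map_sub]
        congr 1
        rw [hR]
        ring
      have h3 : D (B * (Ω * p)) = D (Ω * (B * p)) := by
        rw [mul_left_comm]
      have g1 : u (C c⁻¹ * A * HqP q p) = c⁻¹ * u (A * HqP q p) := by
        rw [mul_assoc, hCm]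
      have g2 : u (C c⁻¹ * R * p) = c⁻¹ * u (R * p) := by
        rw [mul_assoc, hCm]
      linear_combination (-1 : ℂ) * g1 + g2 + c⁻¹ * e1 - c⁻¹ * e2 - c⁻¹ * h3 -
        c⁻¹ * h1 + c⁻¹ * h2
  refine ⟨?_, hΩ⟩
  apply regular_mF_zero u hreg Δ
  intro s
  have e := LinearMap.congr_fun hrel s
  rw [hΩ] at e
  simp only [mF, LinearMap.add_apply, LinearMap.comp_apply, LinearMap.mulLeft_apply,
    LinearMap.zero_apply, zero_mul, map_zero, add_zero] at e
  exact e

end QLH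

end
end

section
/- Let u be a regular form, Φ (monic), Ψ, B polynomials, and c a zero of Φ. Write Φ(x) = (x − c)Φ_c(x), qΨ(x) + Φ_c(x) = (x − cq)Ψ_{cq}(x) + r_{cq}, and qB(x) = (x − cq)B_{cq}(x) + b_{cq}. Then H_q(Φ u) + Ψ u + B(x^{-1} u (h_q u)) = 0 holds if and only if H_q(Φ_c u) + Ψ_{cq} u + B_{cq}(x^{-1} u (h_q u)) + r_{cq}(x − cq)^{-1} u + b_{cq}(x − cq)^{-1}(x^{-1} u (h_q u)) − {⟨u, Ψ_{cq}⟩ + ⟨x^{-1} u (h_q u), B_{cq}⟩} δ_{cq} = 0. -/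
open Polynomial

noncomputable section

namespace QLH

private lemma thetaP_spec (c : ℂ) (f : Polynomial ℂ) :
    (X - C c) * thetaP c f = f - C (f.eval c) := by
  have h0 : (f - C (f.eval c)) %ₘ (X - C c) = 0 := by
    rw [Polynomial.modByMonic_X_sub_C_eq_C_eval]
    simp
  have h := Polynomial.modByMonic_eq_sub_mul_div (f - C (f.eval c)) (X - C c)
  rw [h0] at h
  show (X - C c) * ((f - C (f.eval c)) /ₘ (X - C c)) = f - C (f.eval c)
  linear_combination h

private lemma theta_mul (c : ℂ) (f : Polynomial ℂ) : thetaP c ((X - C c) * f) = f := by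
  have h := thetaP_spec c ((X - C c) * f)
  have he : ((X - C c) * f).eval c = 0 := by simp
  rw [he, Polynomial.C_0, sub_zero] at h
  exact mul_left_cancel₀ (Polynomial.X_sub_C_ne_zero c) h

private lemma thetaP_one (c : ℂ) : thetaP c (1 : Polynomial ℂ) = 0 := by
  show ((1 : Polynomial ℂ) - C ((1 : Polynomial ℂ).eval c)) /ₘ (X - C c) = 0
  simp

private lemma hP_eq (q : ℂ) (f : Polynomial ℂ) : hP q f = f.comp (C q * X) := by
  simp [hP, Polynomial.aeval_def, Polynomial.comp, Polynomial.algebraMap_eq]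

private lemma HqP_spec (q : ℂ) (hq1 : q ≠ 1) (f : Polynomial ℂ) :
    C (q - 1) * X * HqP q f = hP q f - f := by
  have h0 : (hP q f - f).eval 0 = 0 := by
    simp [hP_eq, Polynomial.eval_comp]
  have h := thetaP_spec 0 (hP q f - f)
  rw [h0, Polynomial.C_0, sub_zero, sub_zero] at h
  have hH : HqP q f = (q - 1)⁻¹ • thetaP 0 (hP q f - f) := by
    simp [HqP, LinearMap.smul_apply, LinearMap.comp_apply, LinearMap.sub_apply,
      LinearMap.id_apply]
  rw [hH, mul_smul_comm, mul_assoc, h, Polynomial.smul_eq_C_mul, ← mul_assoc, ← Polynomial.C_mul,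
    inv_mul_cancel₀ (sub_ne_zero.mpr hq1), Polynomial.C_1, one_mul]

private lemma HqP_shift (q : ℂ) (hq1 : q ≠ 1) (c : ℂ) (f : Polynomial ℂ) :
    HqP q ((X - C (c * q)) * f) = C q * (X - C c) * HqP q f + f := by
  have hne : (C (q - 1) * X : Polynomial ℂ) ≠ 0 :=
    mul_ne_zero (Polynomial.C_ne_zero.mpr (sub_ne_zero.mpr hq1)) Polynomial.X_ne_zero
  apply mul_left_cancel₀ hne
  rw [HqP_spec q hq1]
  have h1 := HqP_spec q hq1 f
  have h2 : hP q ((X - C (c * q)) * f) = (C q * X - C (c * q)) * hP q f := by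
    rw [hP_eq, hP_eq, Polynomial.mul_comp, Polynomial.sub_comp, Polynomial.X_comp,
      Polynomial.C_comp]
  rw [h2]
  simp only [map_sub, map_mul, map_one] at h1 ⊢
  linear_combination (-(C q * (X - C c))) * h1

/-- The central identity: `q • E = (x - cq) E'` pointwise. -/
private lemma key_identity (q c rcq bcq : ℂ) (hq1 : q ≠ 1) (u w : PForm)
    (Φ Ψ B Φc Ψcq Bcq : Polynomial ℂ)
    (hΦ : Φ = (X - C c) * Φc)
    (hΨ : C q * Ψ + Φc = (X - C (c * q)) * Ψcq + C rcq)
    (hB : C q * B = (X - C (c * q)) * Bcq + C bcq)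
    (f : Polynomial ℂ) :
    (HqF q (mF Φc u) + mF Ψcq u + mF Bcq w + rcq • divF (c * q) u
        + bcq • divF (c * q) w - (u Ψcq + w Bcq) • deltaF (c * q))
      ((X - C (c * q)) * f)
    = q * ((HqF q (mF Φ u) + mF Ψ u + mF B w) f) := by
  simp only [LinearMap.add_apply, LinearMap.sub_apply, LinearMap.smul_apply,
    LinearMap.neg_apply, LinearMap.comp_apply, HqF, mF, divF, deltaF, smul_eq_mul,
    LinearMap.mulLeft_apply, Polynomial.leval_apply]
  rw [HqP_shift q hq1 c f, theta_mul (c * q) f]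
  have heval : ((X - C (c * q)) * f).eval (c * q) = 0 := by simp
  rw [heval]
  have e1 : Φc * (C q * (X - C c) * HqP q f + f) = q • (Φ * HqP q f) + Φc * f := by
    rw [hΦ, Polynomial.smul_eq_C_mul]; ring
  have e2 : Ψcq * ((X - C (c * q)) * f) = q • (Ψ * f) + Φc * f - rcq • f := by
    simp only [Polynomial.smul_eq_C_mul]
    linear_combination (-f) * hΨ
  have e3 : Bcq * ((X - C (c * q)) * f) = q • (B * f) - bcq • f := by
    simp only [Polynomial.smul_eq_C_mul]
    linear_combination (-f) * hB
  rw [e1, e2, e3, map_add, map_sub, map_add, map_sub, u.map_smul, u.map_smul, u.map_smul,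
    w.map_smul, w.map_smul]
  simp only [smul_eq_mul]
  ring

/-- The reduced form kills constants. -/
private lemma key_one (q c rcq bcq : ℂ) (u w : PForm) (Φc Ψcq Bcq : Polynomial ℂ) :
    (HqF q (mF Φc u) + mF Ψcq u + mF Bcq w + rcq • divF (c * q) u
        + bcq • divF (c * q) w - (u Ψcq + w Bcq) • deltaF (c * q)) 1 = 0 := by
  simp only [LinearMap.add_apply, LinearMap.sub_apply, LinearMap.smul_apply,
    LinearMap.neg_apply, LinearMap.comp_apply, HqF, mF, divF, deltaF, smul_eq_mul,
    LinearMap.mulLeft_apply, Polynomial.leval_apply]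
  rw [HqP_one, thetaP_one, mul_zero, map_zero, map_zero, mul_one, mul_one]
  simp

/-- Lemma 5: equivalence between the q-difference equation and its
reduced version at a zero `c` of `Φ`. -/
theorem reduction_lemma (q : ℂ) (hq0 : q ≠ 0) (hq : ∀ n : ℕ, 1 ≤ n → q ^ n ≠ 1)
    (u : PForm) (hreg : IsRegular u)
    (Φ Ψ B Φc Ψcq Bcq : Polynomial ℂ) (rcq bcq c : ℂ) (hΦmonic : Φ.Monic)
    (hΦ : Φ = (X - C c) * Φc)
    (hΨ : C q * Ψ + Φc = (X - C (c * q)) * Ψcq + C rcq)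
    (hB : C q * B = (X - C (c * q)) * Bcq + C bcq) :
    LHeq q u Φ Ψ B ↔
      HqF q (mF Φc u) + mF Ψcq u + mF Bcq (divF 0 (cF u (hF q u)))
        + rcq • divF (c * q) u + bcq • divF (c * q) (divF 0 (cF u (hF q u)))
        - (u Ψcq + (divF 0 (cF u (hF q u))) Bcq) • deltaF (c * q) = 0 := by
  have hq1 : q ≠ 1 := by simpa using hq 1 le_rfl
  set w : PForm := divF 0 (cF u (hF q u)) with hw
  constructor
  · intro h
    unfold LHeq at h
    apply LinearMap.ext
    intro g
    have hdecomp : g = (X - C (c * q)) * (g /ₘ (X - C (c * q))) + C (g.eval (c * q)) := by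
      have hm := Polynomial.modByMonic_eq_sub_mul_div g (X - C (c * q))
      rw [Polynomial.modByMonic_X_sub_C_eq_C_eval] at hm
      linear_combination -hm
    rw [LinearMap.zero_apply]
    conv_lhs => rw [hdecomp]
    rw [map_add, key_identity q c rcq bcq hq1 u w Φ Ψ B Φc Ψcq Bcq hΦ hΨ hB]
    rw [h, LinearMap.zero_apply, mul_zero, zero_add]
    have hC : (C (g.eval (c * q)) : Polynomial ℂ) = g.eval (c * q) • (1 : Polynomial ℂ) := by
      rw [Polynomial.smul_eq_C_mul, mul_one]
    rw [hC, map_smul, key_one q c rcq bcq u w Φc Ψcq Bcq, smul_zero]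
  · intro h
    unfold LHeq
    apply LinearMap.ext
    intro f
    have hk := key_identity q c rcq bcq hq1 u w Φ Ψ B Φc Ψcq Bcq hΦ hΨ hB f
    rw [h, LinearMap.zero_apply] at hk
    rw [LinearMap.zero_apply]
    exact (mul_eq_zero.mp hk.symm).resolve_left hq0

end QLH

end
end
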